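/- The function f(t) = log(sinh(t)/t) / log(cosh(t)) is strictly increasing on (0, log(1+√2)), with limit 1/3 as t → 0⁺ and limit -2·log(log(1+√2))/log 2 as t → log(1+√2)⁻. -/

import Mathlib

open Real Set Filter

lemma exp_ub {t : ℝ} (h0 : 0 ≤ t) (h1 : t ≤ 1) :
    exp t ≤ 1 + t + t^2/2 + t^3/6 + t^4/24 + t^5/120 + t^6/720 + t^7/5040 + 9*t^8/322560 := by
  have h := Real.exp_bound (n := 8) (by rw [abs_of_nonneg h0]; exact h1) (by norm_num)
  rw [abs_of_nonneg h0] at h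
  have := (abs_sub_le_iff.1 h).1
  simp [Finset.sum_range_succ, Nat.factorial] at this ⊢
  nlinarith [this]

lemma exp_lb {t : ℝ} (h0 : 0 ≤ t) (h1 : t ≤ 1) :
    1 + t + t^2/2 + t^3/6 + t^4/24 + t^5/120 + t^6/720 + t^7/5040 - 9*t^8/322560 ≤ exp t := by
  have h := Real.exp_bound (n := 8) (by rw [abs_of_nonneg h0]; exact h1) (by norm_num)
  rw [abs_of_nonneg h0] at h
  have := (abs_sub_le_iff.1 h).2
  simp [Finset.sum_range_succ, Nat.factorial] at this ⊢
  nlinarith [this]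

lemma exp_neg_ub {t : ℝ} (h0 : 0 ≤ t) (h1 : t ≤ 1) :
    exp (-t) ≤ 1 - t + t^2/2 - t^3/6 + t^4/24 - t^5/120 + t^6/720 - t^7/5040 + 9*t^8/322560 := by
  have h := Real.exp_bound (x := -t) (n := 8) (by rw [abs_neg, abs_of_nonneg h0]; exact h1) (by norm_num)
  rw [abs_neg, abs_of_nonneg h0] at h
  have := (abs_sub_le_iff.1 h).1
  simp [Finset.sum_range_succ, Nat.factorial] at this ⊢
  nlinarith [this]

lemma exp_neg_lb {t : ℝ} (h0 : 0 ≤ t) (h1 : t ≤ 1) :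
    1 - t + t^2/2 - t^3/6 + t^4/24 - t^5/120 + t^6/720 - t^7/5040 - 9*t^8/322560 ≤ exp (-t) := by
  have h := Real.exp_bound (x := -t) (n := 8) (by rw [abs_neg, abs_of_nonneg h0]; exact h1) (by norm_num)
  rw [abs_neg, abs_of_nonneg h0] at h
  have := (abs_sub_le_iff.1 h).2
  simp [Finset.sum_range_succ, Nat.factorial] at this ⊢
  nlinarith [this]

lemma sinh_lb {t : ℝ} (h0 : 0 ≤ t) (h1 : t ≤ 1) : t + t^3/6 + t^5/120 ≤ sinh t := by
  rw [Real.sinh_eq]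
  nlinarith [exp_lb h0 h1, exp_neg_ub h0 h1, pow_le_pow_of_le_one h0 h1 (by norm_num : 7 ≤ 8), pow_nonneg h0 7, pow_nonneg h0 8,
    mul_le_of_le_one_right (pow_nonneg h0 7) h1]

lemma sinh_ub {t : ℝ} (h0 : 0 ≤ t) (h1 : t ≤ 1) : sinh t ≤ t + t^3/6 + t^5/120 + t^7/100 := by
  rw [Real.sinh_eq]
  nlinarith [exp_ub h0 h1, exp_neg_lb h0 h1, pow_nonneg h0 7, pow_nonneg h0 8,
    mul_le_of_le_one_right (pow_nonneg h0 7) h1]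

lemma cosh_lb {t : ℝ} (h0 : 0 ≤ t) (h1 : t ≤ 1) : 1 + t^2/2 + t^4/24 ≤ cosh t := by
  rw [Real.cosh_eq]
  nlinarith [exp_lb h0 h1, exp_neg_lb h0 h1, pow_le_pow_of_le_one h0 h1 (by norm_num : (6:ℕ) ≤ 8), pow_nonneg h0 6]

lemma cosh_ub {t : ℝ} (h0 : 0 ≤ t) (h1 : t ≤ 1) : cosh t ≤ 1 + t^2/2 + t^4/24 + t^6/700 := by
  rw [Real.cosh_eq]
  nlinarith [exp_ub h0 h1, exp_neg_ub h0 h1, pow_le_pow_of_le_one h0 h1 (by norm_num : (6:ℕ) ≤ 8), pow_nonneg h0 6]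

lemma poly_key {t : ℝ} (h0 : 0 < t) (h1 : t ≤ 0.9) :
    (1+t^2/2+t^4/24+t^6/700)*(2*t^2 - (t+t^3/6+t^5/120)^2) < t*(t+t^3/6+t^5/120) := by
  nlinarith [pow_pos h0 6, pow_pos h0 8, pow_pos h0 10, pow_pos h0 12, pow_pos h0 14, pow_pos h0 16,
    pow_le_pow_of_le_one h0.le (by linarith) (by norm_num : (6:ℕ) ≤ 8),
    pow_le_pow_of_le_one h0.le (by linarith) (by norm_num : (6:ℕ) ≤ 10),
    pow_le_pow_of_le_one h0.le (by linarith) (by norm_num : (6:ℕ) ≤ 12),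
    pow_le_pow_of_le_one h0.le (by linarith) (by norm_num : (6:ℕ) ≤ 14),
    pow_le_pow_of_le_one h0.le (by linarith) (by norm_num : (6:ℕ) ≤ 16)]

lemma P_pos {t : ℝ} (h0 : 0 < t) (h1 : t ≤ 0.9) :
    0 < cosh t * (sinh t ^ 2 - 2*t^2) + t * sinh t := by
  have hs := sinh_lb h0.le (by linarith)
  have hc := cosh_ub h0.le (by linarith)
  have hs0 : 0 < sinh t := by rwa [Real.sinh_pos_iff]
  have hc0 : 0 < cosh t := Real.cosh_pos t
  rcases le_or_gt (2*t^2) (sinh t ^ 2) with h | h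
  · nlinarith [mul_nonneg hc0.le (sub_nonneg.2 h), mul_pos h0 hs0]
  · have h2 : cosh t * (2*t^2 - sinh t ^2) ≤ (1+t^2/2+t^4/24+t^6/700) * (2*t^2 - sinh t^2) :=
      mul_le_mul_of_nonneg_right hc (by linarith)
    have key := poly_key h0 h1
    have hslb : 0 < t+t^3/6+t^5/120 := by positivity
    -- (1+..)*(2t² - s²) ≤ (1+..)*(2t² - slb²) since s ≥ slb > 0
    have h3 : (1+t^2/2+t^4/24+t^6/700) * (2*t^2 - sinh t^2)
        ≤ (1+t^2/2+t^4/24+t^6/700) * (2*t^2 - (t+t^3/6+t^5/120)^2) := by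
      have : (t+t^3/6+t^5/120)^2 ≤ sinh t ^2 := by nlinarith
      have hcpos : (0:ℝ) < 1+t^2/2+t^4/24+t^6/700 := by positivity
      nlinarith
    have h4 : t*(t+t^3/6+t^5/120) ≤ t * sinh t := by nlinarith
    nlinarith

lemma hL {t : ℝ} (ht : 0 < t) :
    HasDerivAt (fun t : ℝ => Real.log (Real.sinh t / t)) (cosh t / sinh t - 1/t) t := by
  have hs : sinh t ≠ 0 := ne_of_gt (Real.sinh_pos_iff.2 ht)
  have h1 : HasDerivAt (fun t : ℝ => Real.sinh t / t) ((cosh t * t - sinh t * 1)/t^2) t :=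
    (Real.hasDerivAt_sinh t).div (hasDerivAt_id t) ht.ne'
  have h2 := h1.log (div_ne_zero hs ht.ne')
  convert h2 using 1
  field_simp

lemma hM (t : ℝ) :
    HasDerivAt (fun t : ℝ => Real.log (Real.cosh t)) (sinh t / cosh t) t := by
  exact (Real.hasDerivAt_cosh t).log (ne_of_gt (Real.cosh_pos t))

lemma hG {t : ℝ} (ht : 0 < t) :
    HasDerivAt (fun t : ℝ => (Real.cosh t / Real.sinh t - 1/t) * (Real.cosh t / Real.sinh t))
      ((cosh t * (sinh t ^ 2 - 2*t^2) + t * sinh t)/(t^2 * sinh t ^ 3)) t := by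
  have hs : sinh t ≠ 0 := ne_of_gt (Real.sinh_pos_iff.2 ht)
  have h1 : HasDerivAt (fun t : ℝ => Real.cosh t / Real.sinh t)
      ((sinh t * sinh t - cosh t * cosh t)/(sinh t)^2) t :=
    (Real.hasDerivAt_cosh t).div (Real.hasDerivAt_sinh t) hs
  have h2 : HasDerivAt (fun t : ℝ => 1/t) ((0 * t - 1 * 1)/t^2) t :=
    (hasDerivAt_const t 1).div (hasDerivAt_id t) ht.ne'
  have h3 := (h1.sub h2).mul h1
  refine h3.congr_deriv (Eq.symm ?_)
  have hc2 : cosh t * cosh t = sinh t ^ 2 + 1 := by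
    nlinarith [Real.cosh_sq_sub_sinh_sq t]
  simp only [Pi.sub_apply]
  field_simp
  rw [Real.cosh_sq']
  ring

lemma G_mono : StrictMonoOn
    (fun t : ℝ => (Real.cosh t / Real.sinh t - 1/t) * (Real.cosh t / Real.sinh t))
    (Set.Ioc 0 0.9) := by
  apply strictMonoOn_of_deriv_pos (convex_Ioc 0 0.9)
  · intro x hx
    exact (hG hx.1).continuousAt.continuousWithinAt
  · intro x hx
    rw [interior_Ioc] at hx
    rw [(hG hx.1).deriv]
    apply div_pos (P_pos hx.1 hx.2.le)
    exact mul_pos (pow_pos hx.1 2) (pow_pos (Real.sinh_pos_iff.2 hx.1) 3)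

lemma L_tendsto0 : Tendsto (fun t : ℝ => Real.log (Real.sinh t / t)) (nhdsWithin 0 (Set.Ioi 0)) (nhds 0) := by
  have h1 : Tendsto (fun t : ℝ => Real.sinh t / t) (nhdsWithin 0 {(0:ℝ)}ᶜ) (nhds 1) := by
    have := hasDerivAt_iff_tendsto_slope.1 (Real.hasDerivAt_sinh 0)
    rw [Real.cosh_zero] at this
    apply this.congr'
    filter_upwards [self_mem_nhdsWithin] with t ht
    simp [slope, Real.sinh_zero]
    ring
  have h2 : Tendsto (fun t : ℝ => Real.log (Real.sinh t / t)) (nhdsWithin 0 {(0:ℝ)}ᶜ) (nhds 0) := by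
    have hlog : Tendsto Real.log (nhds 1) (nhds 0) := by
      simpa using (Real.continuousAt_log one_ne_zero).tendsto
    exact hlog.comp h1
  exact h2.mono_left (nhdsWithin_mono 0 (fun x hx => ne_of_gt hx))

lemma M_tendsto0 : Tendsto (fun t : ℝ => Real.log (Real.cosh t)) (nhdsWithin 0 (Set.Ioi 0)) (nhds 0) := by
  have h : ContinuousWithinAt (fun t : ℝ => Real.log (Real.cosh t)) (Set.Ioi 0) 0 :=
    (hM 0).continuousAt.continuousWithinAt
  have h2 : Tendsto (fun t : ℝ => Real.log (Real.cosh t)) (nhdsWithin 0 (Set.Ioi 0))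
      (nhds (Real.log (Real.cosh 0))) := h
  simpa using h2

lemma num_pos {b : ℝ} (hb0 : 0 < b) (hb : b ≤ 0.9) :
    0 < (cosh b / sinh b - 1/b) * Real.log (Real.cosh b)
        - Real.log (Real.sinh b / b) * (sinh b / cosh b) := by
  obtain ⟨ξ, hξ, heq⟩ := exists_ratio_hasDerivAt_eq_ratio_slope'
    (fun t : ℝ => Real.log (Real.sinh t / t)) (fun t => cosh t / sinh t - 1/t)
    hb0 (fun t : ℝ => Real.log (Real.cosh t)) (fun t => sinh t / cosh t)
    (fun x hx => hL hx.1) (fun x _ => hM x)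
    L_tendsto0 M_tendsto0
    ((hL hb0).continuousAt.continuousWithinAt : ContinuousWithinAt _ (Set.Iio b) b)
    ((hM b).continuousAt.continuousWithinAt : ContinuousWithinAt _ (Set.Iio b) b)
  rw [sub_zero, sub_zero] at heq
  -- heq : log (cosh b) * (cosh ξ/sinh ξ - 1/ξ) = log (sinh b / b) * (sinh ξ/cosh ξ)
  have hsξ : 0 < sinh ξ := Real.sinh_pos_iff.2 hξ.1
  have hcξ : 0 < cosh ξ := Real.cosh_pos ξ
  have hsb : 0 < sinh b := Real.sinh_pos_iff.2 hb0
  have hcb : 0 < cosh b := Real.cosh_pos b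
  have hMb : 0 < Real.log (Real.cosh b) := Real.log_pos (Real.one_lt_cosh.2 hb0.ne')
  have hM'b : 0 < sinh b / cosh b := div_pos hsb hcb
  have hGlt : (cosh ξ / sinh ξ - 1/ξ) * (cosh ξ / sinh ξ)
      < (cosh b / sinh b - 1/b) * (cosh b / sinh b) :=
    G_mono ⟨hξ.1, le_trans hξ.2.le hb⟩ ⟨hb0, hb⟩ hξ.2
  have hLb : Real.log (Real.sinh b / b)
      = Real.log (Real.cosh b) * ((cosh ξ / sinh ξ - 1/ξ) * (cosh ξ / sinh ξ)) := by
    have h2 := congrArg (fun z => z * (cosh ξ / sinh ξ)) heq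
    simp only at h2
    have h3 : Real.log (Real.sinh b / b) * (sinh ξ / cosh ξ) * (cosh ξ / sinh ξ)
        = Real.log (Real.sinh b / b) := by field_simp
    rw [h3] at h2
    rw [← h2]; ring
  have key : (cosh b / sinh b - 1/b)
      = ((cosh b / sinh b - 1/b) * (cosh b / sinh b)) * (sinh b / cosh b) := by
    field_simp
  rw [key, hLb]
  have hre : ((cosh b / sinh b - 1/b) * (cosh b / sinh b)) * (sinh b / cosh b) * Real.log (Real.cosh b)
      - Real.log (Real.cosh b) * ((cosh ξ / sinh ξ - 1/ξ) * (cosh ξ / sinh ξ)) * (sinh b / cosh b)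
      = Real.log (Real.cosh b) * (sinh b / cosh b) * (((cosh b / sinh b - 1/b) * (cosh b / sinh b))
        - ((cosh ξ / sinh ξ - 1/ξ) * (cosh ξ / sinh ξ))) := by ring
  rw [hre]
  exact mul_pos (mul_pos hMb hM'b) (sub_pos.2 hGlt)

lemma T_pos : 0 < Real.log (1 + Real.sqrt 2) :=
  Real.log_pos (by nlinarith [Real.sqrt_pos.2 (by norm_num : (0:ℝ) < 2)])

lemma T_le : Real.log (1 + Real.sqrt 2) ≤ 0.9 := by
  rw [Real.log_le_iff_le_exp (by positivity)]
  have h1 : Real.sqrt 2 < 1.41422 := by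
    have h := Real.sq_sqrt (by norm_num : (2:ℝ) ≥ 0)
    nlinarith [Real.sqrt_nonneg 2]
  have h2 := exp_lb (by norm_num : (0:ℝ) ≤ 0.9) (by norm_num)
  norm_num at h2 ⊢
  nlinarith

lemma sinh_T : Real.sinh (Real.log (1 + Real.sqrt 2)) = 1 := by
  rw [Real.sinh_log (by positivity)]
  have h := Real.sq_sqrt (by norm_num : (2:ℝ) ≥ 0)
  have h2 : (0:ℝ) < 1 + Real.sqrt 2 := by positivity
  field_simp
  nlinarith [Real.sqrt_nonneg 2]

lemma cosh_T : Real.cosh (Real.log (1 + Real.sqrt 2)) = Real.sqrt 2 := by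
  rw [Real.cosh_log (by positivity)]
  have h := Real.sq_sqrt (by norm_num : (2:ℝ) ≥ 0)
  have h2 : (0:ℝ) < 1 + Real.sqrt 2 := by positivity
  field_simp
  nlinarith [Real.sqrt_nonneg 2]

lemma hF {t : ℝ} (ht : 0 < t) :
    HasDerivAt (fun t : ℝ => Real.log (Real.sinh t / t) / Real.log (Real.cosh t))
      (((cosh t / sinh t - 1/t) * Real.log (Real.cosh t)
        - Real.log (Real.sinh t / t) * (sinh t / cosh t)) / (Real.log (Real.cosh t))^2) t := by
  exact (hL ht).div (hM t) (ne_of_gt (Real.log_pos (Real.one_lt_cosh.2 ht.ne')))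

lemma main_mono : StrictMonoOn (fun t : ℝ => Real.log (Real.sinh t / t) / Real.log (Real.cosh t))
    (Set.Ioo 0 (Real.log (1 + Real.sqrt 2))) := by
  apply strictMonoOn_of_deriv_pos (convex_Ioo _ _)
  · intro x hx
    exact (hF hx.1).continuousAt.continuousWithinAt
  · intro x hx
    rw [interior_Ioo] at hx
    rw [(hF hx.1).deriv]
    apply div_pos (num_pos hx.1 (le_trans hx.2.le T_le))
    exact pow_pos (Real.log_pos (Real.one_lt_cosh.2 hx.1.ne')) 2

lemma lim_T : Filter.Tendsto (fun t : ℝ => Real.log (Real.sinh t / t) / Real.log (Real.cosh t))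
    (nhdsWithin (Real.log (1 + Real.sqrt 2)) (Set.Iio (Real.log (1 + Real.sqrt 2))))
    (nhds (-2 * Real.log (Real.log (1 + Real.sqrt 2)) / Real.log 2)) := by
  set T := Real.log (1 + Real.sqrt 2) with hT
  have hcont : ContinuousAt (fun t : ℝ => Real.log (Real.sinh t / t) / Real.log (Real.cosh t)) T :=
    (hF T_pos).continuousAt
  have hval : Real.log (Real.sinh T / T) / Real.log (Real.cosh T)
      = -2 * Real.log T / Real.log 2 := by
    rw [sinh_T, cosh_T]
    rw [show (1:ℝ)/T = T⁻¹ by rw [one_div]]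
    rw [Real.log_inv, Real.log_sqrt (by norm_num)]
    rw [div_div_eq_mul_div]
    ring
  have h := hcont.continuousWithinAt (s := Set.Iio T)
  have h2 : Tendsto (fun t : ℝ => Real.log (Real.sinh t / t) / Real.log (Real.cosh t))
      (nhdsWithin T (Set.Iio T)) (nhds (Real.log (Real.sinh T / T) / Real.log (Real.cosh T))) := h
  rwa [hval] at h2

lemma log_ge {x : ℝ} (hx : 0 < x) : 1 - x⁻¹ ≤ Real.log x := by
  have h := Real.log_le_sub_one_of_pos (inv_pos.2 hx)
  rw [Real.log_inv] at h
  linarith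

lemma L_bounds {t : ℝ} (h0 : 0 < t) (h1 : t ≤ 1/2) :
    t^2/6 - t^4/4 ≤ Real.log (Real.sinh t / t) ∧ Real.log (Real.sinh t / t) ≤ t^2/6 + t^4 := by
  have hs1 := sinh_lb h0.le (by linarith)
  have hs2 := sinh_ub h0.le (by linarith)
  have hst : 0 < sinh t / t := div_pos (Real.sinh_pos_iff.2 h0) h0
  set u := Real.sinh t / t - 1 with hu
  clear_value u
  have hsu : Real.sinh t / t = 1 + u := by rw [hu]; ring
  have hu1 : t^2/6 ≤ u := by
    rw [hu, div_sub' h0.ne']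
    rw [le_div_iff₀ h0]
    nlinarith [pow_pos h0 5]
  have hu2 : u ≤ t^2/6 + t^4/2 := by
    rw [hu, div_sub' h0.ne']
    rw [div_le_iff₀ h0]
    nlinarith [pow_pos h0 5, pow_pos h0 7, pow_le_pow_of_le_one h0.le (by linarith) (by norm_num : (5:ℕ) ≤ 7)]
  have hu0 : 0 < 1 + u := by nlinarith [pow_pos h0 2]
  constructor
  · have h2 := log_ge hu0
    rw [hsu]
    have h3 : 1 - (1+u)⁻¹ ≥ u - u^2 := by
      have e : 1 - (1+u)⁻¹ = u/(1+u) := by field_simp; ring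
      rw [e, ge_iff_le, le_div_iff₀ hu0]
      nlinarith [pow_pos h0 2, sq_nonneg u, pow_pos h0 4]
    have ht2 : t^2 ≤ 1/4 := by nlinarith
    have hu3 : u ≤ t^2/2 := by nlinarith [mul_nonneg (sq_nonneg t) (sub_nonneg.2 ht2)]
    nlinarith
  · have h2 := Real.log_le_sub_one_of_pos (show (0:ℝ) < 1 + u by linarith)
    rw [hsu]
    nlinarith

lemma M_bounds {t : ℝ} (h0 : 0 < t) (h1 : t ≤ 1/2) :
    t^2/2 - t^4 ≤ Real.log (Real.cosh t) ∧ Real.log (Real.cosh t) ≤ t^2/2 + t^4 := by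
  have hc1 := cosh_lb h0.le (by linarith)
  have hc2 := cosh_ub h0.le (by linarith)
  set v := Real.cosh t - 1 with hv
  clear_value v
  have hcv : Real.cosh t = 1 + v := by rw [hv]; ring
  have hv1 : t^2/2 ≤ v := by rw [hv]; nlinarith
  have hv2 : v ≤ t^2/2 + t^4/2 := by
    rw [hv]
    nlinarith [pow_pos h0 4, pow_pos h0 6, pow_le_pow_of_le_one h0.le (by linarith) (by norm_num : (4:ℕ) ≤ 6)]
  have hv0 : 0 < 1 + v := by nlinarith [pow_pos h0 2]
  constructor
  · have h2 := log_ge hv0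
    rw [hcv]
    have h3 : 1 - (1+v)⁻¹ ≥ v - v^2 := by
      have e : 1 - (1+v)⁻¹ = v/(1+v) := by field_simp; ring
      rw [e, ge_iff_le, le_div_iff₀ hv0]
      nlinarith [pow_pos h0 2, sq_nonneg v, pow_pos h0 4]
    have ht2 : t^2 ≤ 1/4 := by nlinarith
    have hv3 : v ≤ t^2 := by nlinarith [mul_nonneg (sq_nonneg t) (sub_nonneg.2 ht2)]
    nlinarith
  · have h2 := Real.log_le_sub_one_of_pos hv0
    rw [hcv]
    nlinarith

lemma lim_0 : Filter.Tendsto (fun t : ℝ => Real.log (Real.sinh t / t) / Real.log (Real.cosh t))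
    (nhdsWithin 0 (Set.Ioi 0)) (nhds (1/3)) := by
  have hlo : Tendsto (fun t : ℝ => (1/6 - t^2/4)/(1/2 + t^2)) (nhdsWithin 0 (Set.Ioi 0)) (nhds (1/3)) := by
    have c1 : ContinuousAt (fun t : ℝ => (1/6 - t^2/4)/(1/2 + t^2)) 0 := by
      apply ContinuousAt.div
      · fun_prop
      · fun_prop
      · norm_num
    have := c1.tendsto.mono_left (nhdsWithin_le_nhds (s := Set.Ioi (0:ℝ)))
    norm_num at this
    convert this using 2
  have hhi : Tendsto (fun t : ℝ => (1/6 + t^2)/(1/2 - t^2)) (nhdsWithin 0 (Set.Ioi 0)) (nhds (1/3)) := by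
    have c1 : ContinuousAt (fun t : ℝ => (1/6 + t^2)/(1/2 - t^2)) 0 := by
      apply ContinuousAt.div
      · fun_prop
      · fun_prop
      · norm_num
    have := c1.tendsto.mono_left (nhdsWithin_le_nhds (s := Set.Ioi (0:ℝ)))
    norm_num at this
    convert this using 2
  apply tendsto_of_tendsto_of_tendsto_of_le_of_le' hlo hhi
  · filter_upwards [Ioo_mem_nhdsGT_of_mem (show (0:ℝ) ∈ Ico 0 (1/2) by norm_num)] with t ht
    obtain ⟨hL1, hL2⟩ := L_bounds ht.1 ht.2.le
    obtain ⟨hM1, hM2⟩ := M_bounds ht.1 ht.2.le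
    have ht2 : t^2 < 1/4 := by nlinarith [ht.1, ht.2]
    have hMpos : 0 < Real.log (Real.cosh t) := by nlinarith [pow_pos ht.1 2, pow_pos ht.1 4]
    rw [div_le_div_iff₀ (by norm_num; nlinarith) hMpos]
    nlinarith [pow_pos ht.1 2, pow_pos ht.1 4, mul_pos (pow_pos ht.1 2) (pow_pos ht.1 4)]
  · filter_upwards [Ioo_mem_nhdsGT_of_mem (show (0:ℝ) ∈ Ico 0 (1/2) by norm_num)] with t ht
    obtain ⟨hL1, hL2⟩ := L_bounds ht.1 ht.2.le
    obtain ⟨hM1, hM2⟩ := M_bounds ht.1 ht.2.le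
    have ht2 : t^2 < 1/4 := by nlinarith [ht.1, ht.2]
    have hMpos : 0 < Real.log (Real.cosh t) := by nlinarith [pow_pos ht.1 2, pow_pos ht.1 4]
    rw [div_le_div_iff₀ hMpos (by nlinarith)]
    nlinarith [pow_pos ht.1 2, pow_pos ht.1 4, mul_pos (pow_pos ht.1 2) (pow_pos ht.1 4)]

open Real in
theorem stmt_15 :
    StrictMonoOn (fun t : ℝ => Real.log (Real.sinh t / t) / Real.log (Real.cosh t))
      (Set.Ioo 0 (Real.log (1 + Real.sqrt 2))) ∧
    Filter.Tendsto (fun t : ℝ => Real.log (Real.sinh t / t) / Real.log (Real.cosh t))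
      (nhdsWithin 0 (Set.Ioi 0)) (nhds (1 / 3)) ∧
    Filter.Tendsto (fun t : ℝ => Real.log (Real.sinh t / t) / Real.log (Real.cosh t))
      (nhdsWithin (Real.log (1 + Real.sqrt 2)) (Set.Iio (Real.log (1 + Real.sqrt 2))))
      (nhds (-2 * Real.log (Real.log (1 + Real.sqrt 2)) / Real.log 2)) := by
  exact ⟨main_mono, lim_0, lim_T⟩
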